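/- If s is a global minimizer of the cubic model m(s) with parameter σ > 0, then ∇²f(x) + (σ/2)‖s‖·I is positive semidefinite; in particular λ_min(∇²f(x)) ≥ −(σ/2)‖s‖. -/

import Mathlib

open scoped RealInnerProductSpace

set_option maxHeartbeats 1000000


theorem aux_cubic {E : Type*} [NormedAddCommGroup E] [InnerProductSpace ℝ E]
    (H : E →L[ℝ] E) (g : E) (σ : ℝ) (hσ : 0 < σ)
    (M : E → ℝ)
    (hM : ∀ t, M t = ⟪g, t⟫ + (1 / 2) * ⟪t, H t⟫ + σ / 6 * ‖t‖ ^ 3)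
    (s : E) (hmin : ∀ t, M s ≤ M t) :
    ∀ v : E, ⟪v, H v⟫ + σ / 2 * ‖s‖ * ‖v‖ ^ 2 ≥ 0 := by
  have expand : ∀ (α : ℝ) (v : E), M (s + α • v)
      = M s + α * (⟪g, v⟫ + (1/2) * (⟪s, H v⟫ + ⟪v, H s⟫))
        + α ^ 2 / 2 * ⟪v, H v⟫ + σ / 6 * (‖s + α • v‖ ^ 3 - ‖s‖ ^ 3) := by
    intro α v
    simp only [hM, inner_add_left, inner_add_right, map_add, map_smul,
      real_inner_smul_left, real_inner_smul_right]
    ring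
  by_cases hs : s = 0
  · -- case s = 0
    subst hs
    intro v
    have key : ∀ α : ℝ, 0 < α → 0 ≤ ⟪v, H v⟫ + σ / 3 * α * ‖v‖ ^ 3 := by
      intro α hα
      have h1 : M 0 ≤ M (0 + α • v) := hmin _
      have h2 : M 0 ≤ M (0 + (-α) • v) := hmin _
      rw [expand] at h1 h2
      have n1 : ‖(0:E) + α • v‖ = α * ‖v‖ := by
        simp [norm_smul, abs_of_pos hα]
      have n2 : ‖(0:E) + (-α) • v‖ = α * ‖v‖ := by
        simp [norm_smul, abs_of_pos hα]
      rw [n1] at h1; rw [n2] at h2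
      simp only [norm_zero] at h1 h2
      have hα2 : 0 < α ^ 2 := by positivity
      nlinarith [h1, h2, mul_pos hα hα]
    have hQ : 0 ≤ ⟪v, H v⟫ := by
      refine le_of_forall_pos_le_add fun ε hε => ?_
      rcases eq_or_ne v 0 with rfl | hv
      · simp; linarith
      have hvn : 0 < ‖v‖ ^ 3 := pow_pos (norm_pos_iff.mpr hv) 3
      have hα : 0 < 3 * ε / (σ * ‖v‖ ^ 3) :=
        div_pos (by linarith) (mul_pos hσ hvn)
      have := key _ hα
      have : σ / 3 * (3 * ε / (σ * ‖v‖ ^ 3)) * ‖v‖ ^ 3 = ε := by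
        field_simp
      linarith [key _ hα, this.le, this.ge]
    simp only [norm_zero]
    nlinarith [hQ, sq_nonneg ‖v‖]
  · -- case s ≠ 0
    have hsn : (0:ℝ) < ‖s‖ := norm_pos_iff.mpr hs
    -- stationarity
    have stat : ∀ v : E, ⟪g, v⟫ + (1/2) * (⟪s, H v⟫ + ⟪v, H s⟫) + σ/2 * ‖s‖ * ⟪s, v⟫ = 0 := by
      intro v
      set φ : ℝ → ℝ := fun α => ‖s‖^2 + 2*α*⟪s,v⟫ + α^2*‖v‖^2 with hφdef
      have hφ0 : φ 0 = ‖s‖^2 := by simp [hφdef]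
      have hφ0' : φ 0 ≠ 0 := by rw [hφ0]; positivity
      have hnorm : ∀ α : ℝ, ‖s + α • v‖ = Real.sqrt (φ α) := by
        intro α
        have : φ α = ‖s + α • v‖^2 := by
          rw [norm_add_sq_real]
          simp only [norm_smul, real_inner_smul_right, Real.norm_eq_abs, mul_pow, sq_abs]
          ring
        rw [this, Real.sqrt_sq (norm_nonneg _)]
      have hφ' : HasDerivAt φ (2*⟪s,v⟫) 0 := by
        have h1 : HasDerivAt (fun α:ℝ => 2*α*⟪s,v⟫) (2*⟪s,v⟫) 0 := by
          simpa using (((hasDerivAt_id (0:ℝ)).const_mul 2).mul_const ⟪s,v⟫)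
        have h2 : HasDerivAt (fun α:ℝ => α^2*‖v‖^2) 0 0 := by
          simpa using (hasDerivAt_pow 2 (0:ℝ)).mul_const (‖v‖^2)
        have h3 := ((hasDerivAt_const (0:ℝ) (‖s‖^2)).add h1).add h2
        rw [zero_add, add_zero] at h3
        exact h3
      have hsq : HasDerivAt (fun α => Real.sqrt (φ α)) (2*⟪s,v⟫/(2*Real.sqrt (φ 0))) 0 :=
        hφ'.sqrt hφ0'
      have hM' : HasDerivAt (fun α : ℝ => M (s + α • v))
          (⟪g, v⟫ + (1/2) * (⟪s, H v⟫ + ⟪v, H s⟫) + σ/2 * ‖s‖ * ⟪s, v⟫) 0 := by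
        have heq : (fun α : ℝ => M (s + α • v)) = fun α =>
            M s + α * (⟪g, v⟫ + (1/2) * (⟪s, H v⟫ + ⟪v, H s⟫))
            + α ^ 2 / 2 * ⟪v, H v⟫ + σ/6 * ((Real.sqrt (φ α)) ^ 3 - ‖s‖ ^ 3) := by
          funext α; rw [expand, hnorm]
        rw [heq]
        have h1 : HasDerivAt (fun α:ℝ => α * (⟪g, v⟫ + (1/2) * (⟪s, H v⟫ + ⟪v, H s⟫)))
            (⟪g, v⟫ + (1/2) * (⟪s, H v⟫ + ⟪v, H s⟫)) 0 := hasDerivAt_mul_const _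
        have h2 : HasDerivAt (fun α:ℝ => α^2/2 * ⟪v,H v⟫) 0 0 := by
          simpa using ((hasDerivAt_pow 2 (0:ℝ)).div_const 2).mul_const ⟪v, H v⟫
        have h3 : HasDerivAt (fun α:ℝ => σ/6 * ((Real.sqrt (φ α)) ^ 3 - ‖s‖ ^ 3))
            (σ/6 * ((3:ℕ) * (Real.sqrt (φ 0)) ^ 2 * (2*⟪s,v⟫/(2*Real.sqrt (φ 0))))) 0 := by
          have := ((hsq.pow 3).sub_const (‖s‖^3)).const_mul (σ/6)
          simpa using this
        have htot := (((hasDerivAt_const (0:ℝ) (M s)).add h1).add h2).add h3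
        refine htot.congr_deriv ?_
        rw [hφ0, Real.sqrt_sq hsn.le]
        field_simp
        try ring
      have hloc : IsLocalMin (fun α : ℝ => M (s + α • v)) 0 :=
        Filter.Eventually.of_forall (fun α => by simpa using hmin (s + α • v))
      exact hloc.hasDerivAt_eq_zero hM'
    -- the sphere argument
    have sphere : ∀ v : E, ⟪s, v⟫ ≠ 0 → 0 ≤ ⟪v, H v⟫ + σ/2 * ‖s‖ * ‖v‖^2 := by
      intro v hc
      have hv : v ≠ 0 := by rintro rfl; simp at hc
      have hvn : (0:ℝ) < ‖v‖ := norm_pos_iff.mpr hv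
      set c := ⟪s, v⟫ with hcdef
      set α : ℝ := -2 * c / ‖v‖^2 with hαdef
      have hαne : α ≠ 0 := by
        rw [hαdef]
        exact div_ne_zero (mul_ne_zero (by norm_num) hc) (pow_pos hvn 2).ne'
      have hnorm : ‖s + α • v‖ = ‖s‖ := by
        have : ‖s + α • v‖^2 = ‖s‖^2 := by
          rw [norm_add_sq_real]
          simp only [norm_smul, real_inner_smul_right, Real.norm_eq_abs, mul_pow, sq_abs]
          rw [hαdef]
          field_simp
          ring
        calc ‖s + α • v‖ = Real.sqrt (‖s + α • v‖^2) := (Real.sqrt_sq (norm_nonneg _)).symm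
          _ = Real.sqrt (‖s‖^2) := by rw [this]
          _ = ‖s‖ := Real.sqrt_sq (norm_nonneg _)
      have h1 : M s ≤ M (s + α • v) := hmin _
      rw [expand, hnorm] at h1
      have hL := stat v
      have key : 0 ≤ α * (- (σ/2 * ‖s‖ * c)) + α^2/2 * ⟪v, H v⟫ := by
        have h0 : ⟪g, v⟫ + (1/2) * (⟪s, H v⟫ + ⟪v, H s⟫) = - (σ/2 * ‖s‖ * c) := by
          rw [hcdef]; linarith [hL]
        rw [← h0]; linarith
      -- substitute α and clear denominators
      have hc2 : (0:ℝ) < c^2 := by positivity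
      have hv4 : (0:ℝ) < ‖v‖^2 := by positivity
      have heq : (α * (- (σ/2 * ‖s‖ * c)) + α^2/2 * ⟪v, H v⟫) * ((‖v‖^2)^2)
          = (σ * ‖s‖ * c^2 * ‖v‖^2 + 2 * c^2 * ⟪v, H v⟫) := by
        rw [hαdef]; field_simp
      have key2 : 0 ≤ σ * ‖s‖ * c^2 * ‖v‖^2 + 2 * c^2 * ⟪v, H v⟫ := by
        rw [← heq]; exact mul_nonneg key (by positivity)
      nlinarith [key2, hc2, mul_pos hc2 hv4]
    intro v
    rcases eq_or_ne ⟪s, v⟫ 0 with hc | hc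
    · -- perturbation argument
      have hC : 0 ≤ ⟪s, H s⟫ + σ/2 * ‖s‖ * ‖s‖^2 := by
        apply sphere s
        rw [real_inner_self_eq_norm_sq]
        positivity
      set C := ⟪s, H s⟫ + σ/2 * ‖s‖ * ‖s‖^2 with hCdef
      have key : ∀ ε : ℝ, 0 < ε →
          0 ≤ ⟪v, H v⟫ + σ/2 * ‖s‖ * ‖v‖^2 + ε^2 * C := by
        intro ε hε
        have hsv : ⟪v, s⟫ = 0 := by rw [real_inner_comm]; exact hc
        have hval : ∀ δ : ℝ, ⟪s, v + δ • s⟫ = δ * ‖s‖^2 := by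
          intro δ
          simp [inner_add_right, real_inner_smul_right, hc, real_inner_self_eq_norm_sq]
        have i1 : 0 ≤ ⟪v + ε • s, H (v + ε • s)⟫ + σ/2 * ‖s‖ * ‖v + ε • s‖^2 := by
          apply sphere
          rw [hval]
          exact (mul_pos hε (pow_pos hsn 2)).ne'
        have i2 : 0 ≤ ⟪v + (-ε) • s, H (v + (-ε) • s)⟫ + σ/2 * ‖s‖ * ‖v + (-ε) • s‖^2 := by
          apply sphere
          rw [hval]
          exact (mul_neg_of_neg_of_pos (by linarith) (pow_pos hsn 2)).ne
        have e1 : ∀ δ : ℝ, ⟪v + δ • s, H (v + δ • s)⟫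
            = ⟪v, H v⟫ + δ * (⟪v, H s⟫ + ⟪s, H v⟫) + δ^2 * ⟪s, H s⟫ := by
          intro δ
          simp only [inner_add_left, inner_add_right, map_add, map_smul,
            real_inner_smul_left, real_inner_smul_right]
          ring
        have e2 : ∀ δ : ℝ, ‖v + δ • s‖^2 = ‖v‖^2 + δ^2 * ‖s‖^2 := by
          intro δ
          rw [norm_add_sq_real]
          simp only [norm_smul, real_inner_smul_right, hsv, Real.norm_eq_abs, mul_pow, sq_abs]
          ring
        rw [e1, e2] at i1 i2
        rw [hCdef]
        nlinarith [i1, i2]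
      refine le_of_forall_pos_le_add fun ε hε => ?_
      have hδ : 0 < Real.sqrt (ε / (C + 1)) := by
        apply Real.sqrt_pos.mpr; positivity
      have h2 := key _ hδ
      have hsq : Real.sqrt (ε / (C + 1)) ^ 2 = ε / (C + 1) :=
        Real.sq_sqrt (by positivity)
      rw [hsq] at h2
      have : ε / (C + 1) * C ≤ ε := by
        rw [div_mul_eq_mul_div, div_le_iff₀ (by linarith)]
        nlinarith
      linarith
    · exact sphere v hc

/-- If s is a global minimizer of the cubic model m(s) with parameter σ > 0, then
∇²f(x) + (σ/2)‖s‖·I is positive semidefinite; in particular, for every direction v,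
⟪v, (∇²f(x))v⟫ + (σ/2)‖s‖‖v‖² ≥ 0, i.e. λ_min(∇²f(x)) ≥ −(σ/2)‖s‖. -/
theorem stmt4 {d : ℕ} (f : EuclideanSpace ℝ (Fin d) → ℝ) (hf : ContDiff ℝ 2 f)
    (x : EuclideanSpace ℝ (Fin d)) (σ : ℝ) (hσ : 0 < σ)
    (m : EuclideanSpace ℝ (Fin d) → ℝ)
    (hm : ∀ t, m t = f x + ⟪gradient f x, t⟫
        + (1 / 2) * ⟪t, fderiv ℝ (gradient f) x t⟫ + σ / 6 * ‖t‖ ^ 3)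
    (s : EuclideanSpace ℝ (Fin d)) (hmin : ∀ t, m s ≤ m t) :
    ∀ v : EuclideanSpace ℝ (Fin d),
      ⟪v, fderiv ℝ (gradient f) x v⟫ + σ / 2 * ‖s‖ * ‖v‖ ^ 2 ≥ 0 := by
  exact aux_cubic (fderiv ℝ (gradient f) x) (gradient f x) σ hσ
    (fun t => m t - f x) (fun t => by show m t - f x = _; rw [hm]; ring) s
    (fun t => by show m s - f x ≤ m t - f x; linarith [hmin t])
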